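/- Let F: U×𝕋^ℓ → U be fiberwise symplectic with respect to Ω, let K parameterize an F-invariant torus (F(K(θ,φ),φ) = K(θ+ω,φ+α) with ergodic rotation), and let W, V: 𝕋^{d-1}×𝕋^ℓ → ℝ^{2n} satisfy D_zF(K(θ,φ),φ)W(θ,φ) = λ·W(θ+ω,φ+α) and D_zF(K(θ,φ),φ)V(θ,φ) = μ·V(θ+ω,φ+α), with |λμ| < 1 (in particular if 0 < |λ| < 1 and |μ| ≤ 1), and suppose W, V are continuous. Then Vᵀ Ω(K) W ≡ 0 on 𝕋^{d-1}×𝕋^ℓ. -/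
import Mathlib


/-- symplectic orthogonality of invariant rank-1 directions.
If `F` is fiberwise symplectic for `Ω`, `K` parameterizes an `F`-invariant torus
over an ergodic rotation `(ω,α)`, and `W`, `V` are continuous invariant directions
with multipliers `λ`, `μ` satisfying `|λμ| < 1`, then `VᵀΩ(K)W ≡ 0`. -/
theorem symplectic_orthogonality_of_bundles
    (N m ℓ : ℕ)
    (Ω : (Fin N → ℝ) → Matrix (Fin N) (Fin N) ℝ) (hΩ : Continuous Ω)
    (F : (Fin N → ℝ) × (Fin ℓ → ℝ) → (Fin N → ℝ)) (hF : ContDiff ℝ 1 F)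
    (hsymp : ∀ (z : Fin N → ℝ) (φv : Fin ℓ → ℝ) (u v : Fin N → ℝ),
      (∑ p, ∑ q, (fderiv ℝ (fun z' => F (z', φv)) z u) p *
        Ω (F (z, φv)) p q * (fderiv ℝ (fun z' => F (z', φv)) z v) q)
        = ∑ p, ∑ q, u p * Ω z p q * v q)
    (ω : Fin m → ℝ) (α : Fin ℓ → ℝ)
    (hirr : ∀ (k : Fin m → ℤ) (j : Fin ℓ → ℤ), ¬(k = 0 ∧ j = 0) →
      ∀ n : ℤ, (∑ i, (k i : ℝ) * ω i) + (∑ i, (j i : ℝ) * α i) ≠ (n : ℝ))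
    (K : (Fin m → ℝ) × (Fin ℓ → ℝ) → (Fin N → ℝ)) (hK : Continuous K)
    (hKper : ∀ (x : (Fin m → ℝ) × (Fin ℓ → ℝ)) (p : Fin m → ℤ) (q : Fin ℓ → ℤ),
      K (x.1 + fun i => ((p i : ℝ)), x.2 + fun i => ((q i : ℝ))) = K x)
    (hinv : ∀ x : (Fin m → ℝ) × (Fin ℓ → ℝ),
      F (K x, x.2) = K (x.1 + ω, x.2 + α))
    (lam mu : ℝ) (hcontr : |lam * mu| < 1)
    (W V : (Fin m → ℝ) × (Fin ℓ → ℝ) → (Fin N → ℝ))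
    (hW : Continuous W) (hV : Continuous V)
    (hWper : ∀ (x : (Fin m → ℝ) × (Fin ℓ → ℝ)) (p : Fin m → ℤ) (q : Fin ℓ → ℤ),
      W (x.1 + fun i => ((p i : ℝ)), x.2 + fun i => ((q i : ℝ))) = W x)
    (hVper : ∀ (x : (Fin m → ℝ) × (Fin ℓ → ℝ)) (p : Fin m → ℤ) (q : Fin ℓ → ℤ),
      V (x.1 + fun i => ((p i : ℝ)), x.2 + fun i => ((q i : ℝ))) = V x)
    (hWinv : ∀ x : (Fin m → ℝ) × (Fin ℓ → ℝ),
      fderiv ℝ (fun z => F (z, x.2)) (K x) (W x) = lam • W (x.1 + ω, x.2 + α))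
    (hVinv : ∀ x : (Fin m → ℝ) × (Fin ℓ → ℝ),
      fderiv ℝ (fun z => F (z, x.2)) (K x) (V x) = mu • V (x.1 + ω, x.2 + α)) :
    ∀ x : (Fin m → ℝ) × (Fin ℓ → ℝ),
      (∑ p, ∑ q, V x p * Ω (K x) p q * W x q) = 0 := by

  classical
  set G : (Fin m → ℝ) × (Fin ℓ → ℝ) → ℝ :=
    fun x => ∑ p, ∑ q, V x p * Ω (K x) p q * W x q with hGdef
  have hGcont : Continuous G := by
    apply continuous_finset_sum; intro p _
    apply continuous_finset_sum; intro q _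
    exact (((continuous_apply p).comp hV).mul
      ((continuous_apply q).comp ((continuous_apply p).comp (hΩ.comp hK)))).mul
      ((continuous_apply q).comp hW)
  have hstep : ∀ x, G x = (lam * mu) * G (x.1 + ω, x.2 + α) := by
    intro x
    have h := hsymp (K x) x.2 (V x) (W x)
    rw [hVinv x, hWinv x, hinv x] at h
    calc G x = ∑ p, ∑ q, V x p * Ω (K x) p q * W x q := rfl
    _ = ∑ p, ∑ q, (mu • V (x.1 + ω, x.2 + α)) p * Ω (K (x.1 + ω, x.2 + α)) p q
          * (lam • W (x.1 + ω, x.2 + α)) q := h.symm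
    _ = (lam * mu) * G (x.1 + ω, x.2 + α) := by
        simp only [hGdef, Pi.smul_apply, smul_eq_mul, Finset.mul_sum]
        apply Finset.sum_congr rfl; intro p _
        apply Finset.sum_congr rfl; intro q _
        ring
  set T : (Fin m → ℝ) × (Fin ℓ → ℝ) → (Fin m → ℝ) × (Fin ℓ → ℝ) :=
    fun x => (x.1 + ω, x.2 + α) with hTdef
  have hiter : ∀ (k : ℕ) (x), G x = (lam * mu) ^ k * G (T^[k] x) := by
    intro k
    induction k with
    | zero => intro x; simp
    | succ k ih =>
        intro x
        rw [hstep x]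
        have : G (x.1 + ω, x.2 + α) = G (T x) := rfl
        rw [this, ih (T x), Function.iterate_succ_apply, pow_succ]
        ring
  have hGper : ∀ (x : (Fin m → ℝ) × (Fin ℓ → ℝ)) (p : Fin m → ℤ) (q : Fin ℓ → ℤ),
      G (x.1 + fun i => ((p i : ℝ)), x.2 + fun i => ((q i : ℝ))) = G x := by
    intro x p q
    simp only [hGdef, hKper, hWper, hVper]
  obtain ⟨M, hM⟩ : ∃ M, ∀ x, |G x| ≤ M := by
    have hScomp : IsCompact ((Set.Icc (0 : Fin m → ℝ) 1) ×ˢ (Set.Icc (0 : Fin ℓ → ℝ) 1)) :=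
      isCompact_Icc.prod isCompact_Icc
    obtain ⟨M, hM⟩ := hScomp.exists_bound_of_continuousOn hGcont.continuousOn
    refine ⟨M, fun x => ?_⟩
    set y : (Fin m → ℝ) × (Fin ℓ → ℝ) :=
      (fun i => Int.fract (x.1 i), fun i => Int.fract (x.2 i)) with hy
    have hGy : G y = G x := by
      have h1 : (y.1 + fun i => ((⌊x.1 i⌋ : ℝ))) = x.1 := by
        funext i; simp [hy, Int.fract_add_floor]
      have h2 : (y.2 + fun i => ((⌊x.2 i⌋ : ℝ))) = x.2 := by
        funext i; simp [hy, Int.fract_add_floor]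
      have := hGper y (fun i => ⌊x.1 i⌋) (fun i => ⌊x.2 i⌋)
      rw [h1, h2] at this
      simpa using this.symm
    have hyS : y ∈ (Set.Icc (0 : Fin m → ℝ) 1) ×ˢ (Set.Icc (0 : Fin ℓ → ℝ) 1) := by
      constructor <;> constructor <;> intro i <;>
        simp [hy, Int.fract_nonneg, le_of_lt (Int.fract_lt_one _)]
    have := hM y hyS
    rw [← hGy]
    simpa [Real.norm_eq_abs] using this
  intro x
  have hb : ∀ k : ℕ, |G x| ≤ |lam * mu| ^ k * M := by
    intro k
    rw [hiter k x, abs_mul, abs_pow]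
    exact mul_le_mul_of_nonneg_left (hM _) (pow_nonneg (abs_nonneg _) k)
  have hlim : Filter.Tendsto (fun k : ℕ => |lam * mu| ^ k * M) Filter.atTop (nhds 0) := by
    have h0 := tendsto_pow_atTop_nhds_zero_of_lt_one (abs_nonneg (lam * mu)) hcontr
    simpa using h0.mul_const M
  have hle : |G x| ≤ 0 := ge_of_tendsto hlim (Filter.Eventually.of_forall hb)
  have : G x = 0 := abs_eq_zero.mp (le_antisymm hle (abs_nonneg _))
  exact this
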